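/- Let 𝒳 be a class of left R-modules that is self-orthogonal (Ext¹_R(X, X') = 0 for all X, X' ∈ 𝒳) and closed under arbitrary direct sums. Then any module X admitting an 𝒳-filtration (Xα | α ≤ κ) is isomorphic to the direct sum ⊕_{α<κ} (X_{α+1}/X_α) of the consecutive quotients; in particular, 𝒳 is closed under transfinite extensions. -/

import Mathlib

open CategoryTheory CategoryTheory.Limits

set_option autoImplicit false

universe u

variable {R : Type u} [Ring R]

/-- A short exact sequence of `R`-modules encoded by two linear maps. -/
def IsSES {A B C : ModuleCat.{u} R} (f : A →ₗ[R] B) (g : B →ₗ[R] C) : Prop :=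
  Function.Injective f ∧ Function.Exact f g ∧ Function.Surjective g

/-- Vanishing of `Ext^n_R(A, B)` (computed in the abelian category of `R`-modules). -/
def extZero (n : ℕ) (A B : ModuleCat.{u} R) : Prop :=
  Limits.IsZero (((Ext ℤ (ModuleCat.{u} R) n).obj (Opposite.op A)).obj B)

/-- A continuous well-ordered filtration of `M` indexed by ordinals `≤ len`. -/
structure ModFiltration (M : ModuleCat.{u} R) where
  len : Ordinal.{u}
  F : Ordinal.{u} → Submodule R M
  mono : Monotone F
  bot : F 0 = ⊥
  top : F len = ⊤
  limit : ∀ o, o ≤ len → Order.IsSuccLimit o → F o = ⨆ b < o, F b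

/-- The consecutive quotient `F(o+1)/F(o)` of a filtration. -/
noncomputable def ModFiltration.quot {M : ModuleCat.{u} R} (fl : ModFiltration M)
    (o : Ordinal.{u}) : ModuleCat.{u} R :=
  ModuleCat.of R (fl.F (o + 1) ⧸ Submodule.comap (fl.F (o + 1)).subtype (fl.F o))

open DirectSum

/-! ### Auxiliary lemmas -/

lemma exists_section_of_extZero {A B Q : ModuleCat.{u} R} (f : A ⟶ B) (g : B ⟶ Q)
    (hf : Mono f) (hg : Epi g) (hfg : f ≫ g = 0)
    (hex : (ShortComplex.mk f g hfg).Exact)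
    (h1 : extZero 1 Q A) : ∃ s : Q ⟶ B, s ≫ g = 𝟙 Q := by
  haveI := hf; haveI := hg
  have P : ProjectiveResolution Q := (HasProjectiveResolution.out (Z := Q)).some
  set π : P.complex.X 0 ⟶ Q := P.π.f 0 with hπ
  let h : P.complex.X 0 ⟶ B := Projective.factorThru π g
  have hh : h ≫ g = π := Projective.factorThru_comp π g
  have hker : IsLimit (KernelFork.ofι f hfg) := hex.fIsKernel
  have hw : (P.complex.d 1 0 ≫ h) ≫ g = 0 := by
    rw [Category.assoc, hh, hπ]; exact P.complex_d_comp_π_f_zero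
  obtain ⟨u, hu⟩ := KernelFork.IsLimit.lift' hker _ hw
  have hu' : u ≫ f = P.complex.d 1 0 ≫ h := hu
  let K := P.complex.linearYonedaObj ℤ A
  have hz : IsZero (K.homology 1) := h1.of_iso (P.isoExt 1 A).symm
  have hexact : (K.sc' 0 1 2).Exact := by
    rw [← HomologicalComplex.exactAt_iff' K 0 1 2 (by simp) (by simp)]
    exact (HomologicalComplex.exactAt_iff_isZero_homology K 1).2 hz
  rw [ShortComplex.moduleCat_exact_iff] at hexact
  have hcocycle : (K.sc' 0 1 2).g u = 0 := by
    show P.complex.d 2 1 ≫ u = 0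
    rw [← cancel_mono f, Category.assoc, hu', zero_comp, ← Category.assoc,
      P.complex.d_comp_d, zero_comp]
  obtain ⟨v, hv⟩ := hexact u hcocycle
  have hv' : P.complex.d 1 0 ≫ v = u := hv
  let h' : P.complex.X 0 ⟶ B := h - v ≫ f
  have hd : P.complex.d 1 0 ≫ h' = 0 := by
    simp only [h', Preadditive.comp_sub]
    exact sub_eq_zero.2 ((hu'.symm.trans (congrArg (· ≫ f) hv'.symm)).trans (Category.assoc _ _ _))
  obtain ⟨s, hs⟩ := CokernelCofork.IsColimit.desc' P.isColimitCokernelCofork h' hd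
  refine ⟨s, ?_⟩
  have hπs : π ≫ s = h' := hs
  haveI : Epi π := inferInstanceAs (Epi (P.π.f 0))
  rw [← cancel_epi π]
  refine (Category.assoc π s g).symm.trans ((congrArg (· ≫ g) hπs).trans ?_)
  simp only [h', Preadditive.sub_comp, hh, Category.assoc, hfg, comp_zero, sub_zero,
    Category.comp_id]
  exact (congrArg (π - ·) ((Category.assoc _ _ _).trans ((congrArg (v ≫ ·) hfg).trans comp_zero))).trans (sub_zero π)

lemma extZero_congr_right {n : ℕ} {A B B' : ModuleCat.{u} R} (h : extZero n A B)
    (e : B ≅ B') : extZero n A B' :=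
  h.of_iso (((Ext ℤ (ModuleCat.{u} R) n).obj (Opposite.op A)).mapIso e.symm)

lemma exists_compl {M : ModuleCat.{u} R} (N P' : Submodule R M) (hNP : N ≤ P')
    (hx : extZero 1 (ModuleCat.of R (↥P' ⧸ Submodule.comap P'.subtype N))
      (ModuleCat.of R ↥N)) :
    ∃ C : Submodule R M, C ≤ P' ∧ N ⊓ C = ⊥ ∧ N ⊔ C = P' ∧
      Nonempty (↥C ≃ₗ[R] (↥P' ⧸ Submodule.comap P'.subtype N)) := by
  set N' : Submodule R ↥P' := Submodule.comap P'.subtype N with hN'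
  let A : ModuleCat.{u} R := ModuleCat.of R ↥N'
  let B : ModuleCat.{u} R := ModuleCat.of R ↥P'
  let Q : ModuleCat.{u} R := ModuleCat.of R (↥P' ⧸ N')
  let f : A ⟶ B := ModuleCat.ofHom N'.subtype
  let g : B ⟶ Q := ModuleCat.ofHom N'.mkQ
  have hf : Mono f := (ModuleCat.mono_iff_injective f).2 (Submodule.injective_subtype N')
  have hg : Epi g := (ModuleCat.epi_iff_surjective g).2 (Submodule.mkQ_surjective N')
  have hfg : f ≫ g = 0 := by
    ext x; exact (Submodule.Quotient.mk_eq_zero _).2 x.2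
  have hex : (ShortComplex.mk f g hfg).Exact := by
    rw [ShortComplex.moduleCat_exact_iff_range_eq_ker]
    show LinearMap.range N'.subtype = LinearMap.ker N'.mkQ
    rw [Submodule.range_subtype, Submodule.ker_mkQ]
  have hxA : extZero 1 Q A :=
    extZero_congr_right hx ((Submodule.comapSubtypeEquivOfLe hNP).symm.toModuleIso)
  obtain ⟨s, hs⟩ := exists_section_of_extZero f g hf hg hfg hex hxA
  let s' : ↥P' ⧸ N' →ₗ[R] ↥P' := s.hom
  have hs' : ∀ q : ↥P' ⧸ N', N'.mkQ (s' q) = q := fun q => DFunLike.congr_fun (congrArg ModuleCat.Hom.hom hs) q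
  have hsinj : Function.Injective s' := by
    intro a b hab
    have := hs' a; rw [hab, hs' b] at this; exact this.symm
  let D : Submodule R ↥P' := LinearMap.range s'
  have hND : N' ⊓ D = ⊥ := by
    rw [Submodule.eq_bot_iff]
    rintro x ⟨hxN, q, rfl⟩
    have : q = 0 := by
      rw [← hs' q]; exact (Submodule.Quotient.mk_eq_zero _).2 hxN
    rw [this]; exact map_zero s'
  have hNDsup : N' ⊔ D = ⊤ := by
    rw [Submodule.eq_top_iff']
    intro x
    have h1 : x - s' (N'.mkQ x) ∈ N' := by
      have h0 : N'.mkQ (x - s' (N'.mkQ x)) = 0 := by rw [map_sub, hs', sub_self]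
      rwa [Submodule.mkQ_apply, Submodule.Quotient.mk_eq_zero] at h0
    have h2 : s' (N'.mkQ x) ∈ D := ⟨_, rfl⟩
    have hxx : x = (x - s' (N'.mkQ x)) + s' (N'.mkQ x) := by abel
    rw [hxx]
    exact Submodule.add_mem_sup h1 h2
  have hmapN : Submodule.map P'.subtype N' = N := by
    rw [hN', Submodule.map_comap_subtype]
    exact inf_eq_right.mpr hNP
  refine ⟨D.map P'.subtype, Submodule.map_subtype_le _ _, ?_, ?_, ?_⟩
  · rw [← hmapN, ← Submodule.map_inf _ (Submodule.injective_subtype P'), hND, Submodule.map_bot]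
  · rw [← hmapN, ← Submodule.map_sup, hNDsup, Submodule.map_top, Submodule.range_subtype]
  · exact ⟨((Submodule.equivSubtypeMap P' D).symm.trans
      (LinearEquiv.ofInjective s' hsinj).symm)⟩

lemma aux_indep {M : Type u} [AddCommGroup M] [Module R M] {ι : Type*} [LinearOrder ι]
    (C G : ι → Submodule R M) (hdisj : ∀ i, G i ⊓ C i = ⊥)
    (hle : ∀ i j, i < j → C i ≤ G j) : iSupIndep C := by
  classical
  rw [iSupIndep_iff_dfinsupp_lsum_injective]
  rw [← LinearMap.ker_eq_bot, LinearMap.ker_eq_bot']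
  intro v hv
  by_contra hne
  have hsupp : v.support.Nonempty := by
    rw [Finset.nonempty_iff_ne_empty]
    intro h
    exact hne (DFinsupp.support_eq_empty.1 h)
  obtain ⟨i, himem, himax⟩ : ∃ i ∈ v.support, ∀ j ∈ v.support, j ≤ i :=
    ⟨v.support.max' hsupp, v.support.max'_mem hsupp, fun j hj => Finset.le_max' _ _ hj⟩
  have hvsum : (∑ j ∈ v.support, ((v j : M))) = 0 := by
    simpa [DFinsupp.lsum_apply_apply, DFinsupp.sumAddHom_apply, DFinsupp.sum] using hv
  have hrest : (∑ j ∈ v.support.erase i, ((v j : M))) ∈ G i := by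
    apply Submodule.sum_mem
    intro j hj
    have hji : j < i := lt_of_le_of_ne (himax _ (Finset.mem_of_mem_erase hj))
      (Finset.ne_of_mem_erase hj)
    exact hle j i hji (v j).2
  have hsplit : ((v i : M)) + ∑ j ∈ v.support.erase i, ((v j : M))
      = ∑ j ∈ v.support, ((v j : M)) :=
    Finset.add_sum_erase v.support (fun j => ((v j : M))) himem
  rw [hvsum] at hsplit
  have hmem : ((v i : M)) ∈ G i := by
    rw [eq_neg_of_add_eq_zero_left hsplit]
    exact neg_mem hrest
  have : ((v i : M)) = 0 := by
    have h0 : ((v i : M)) ∈ G i ⊓ C i := ⟨hmem, (v i).2⟩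
    rw [hdisj i] at h0
    simpa using h0
  have : v i = 0 := Subtype.ext this
  exact (DFinsupp.mem_support_iff.1 himem) this

lemma filt_sup {M : ModuleCat.{u} R} (fl : ModFiltration M) (C : Ordinal.{u} → Submodule R M)
    (δ : Ordinal.{u}) (hδ : δ ≤ fl.len)
    (hC1 : ∀ o < δ, C o ≤ fl.F (o + 1))
    (hC3 : ∀ o < δ, fl.F o ⊔ C o = fl.F (o + 1)) :
    ∀ α ≤ δ, fl.F α = ⨆ β < α, C β := by
  intro α
  induction α using Ordinal.induction with
  | h α IH =>
  intro hα
  rcases Ordinal.zero_or_succ_or_isSuccLimit α with h0 | ⟨b, rfl⟩ | hlim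
  · subst h0
    rw [fl.bot]
    symm
    simp [fun β : Ordinal.{u} => not_lt_of_ge (zero_le : (0 : Ordinal.{u}) ≤ β)]
  · have hb : b < δ := Order.succ_le_iff.1 hα
    have hb1 : b + 1 = Order.succ b := Ordinal.add_one_eq_succ b
    have hlt : b < b + 1 := hb1 ▸ Order.lt_succ b
    have hle_iff : ∀ β : Ordinal.{u}, β < b + 1 ↔ β ≤ b := fun β => by
      rw [hb1]; exact Order.lt_succ_iff
    rw [← hb1] at hα ⊢
    rw [← hC3 b hb, IH b hlt hb.le]
    apply le_antisymm
    · apply sup_le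
      · exact biSup_mono fun β hβ => hβ.trans hlt
      · exact le_biSup _ hlt
    · apply iSup₂_le
      intro β hβ
      rcases ((hle_iff β).1 hβ).lt_or_eq with h | h
      · exact le_trans (le_biSup _ h) le_sup_left
      · subst h; exact le_sup_right
  · rw [fl.limit α (hα.trans hδ) hlim]
    apply le_antisymm
    · apply iSup₂_le
      intro β hβ
      rw [IH β hβ (hβ.le.trans hα)]
      exact biSup_mono fun γ hγ => hγ.trans hβ
    · apply iSup₂_le
      intro γ hγ
      exact le_trans (hC1 γ (hγ.trans_le hα)) (le_biSup _ (by
        rw [Ordinal.add_one_eq_succ]; exact hlim.succ_lt hγ))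

lemma filt_equiv {M : ModuleCat.{u} R} (fl : ModFiltration M) (C : Ordinal.{u} → Submodule R M)
    (δ : Ordinal.{u}) (hδ : δ ≤ fl.len)
    (hC1 : ∀ o < δ, C o ≤ fl.F (o + 1))
    (hC2 : ∀ o < δ, fl.F o ⊓ C o = ⊥)
    (hC3 : ∀ o < δ, fl.F o ⊔ C o = fl.F (o + 1))
    (hC4 : ∀ o (_ : o < δ), Nonempty (↥(C o) ≃ₗ[R] fl.quot o))
    (α : Ordinal.{u}) (hα : α ≤ δ) :
    Nonempty ((↥(fl.F α)) ≃ₗ[R]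
      ⨁ i : α.ToType, fl.quot ((Ordinal.ToType.mk (o := α)).symm i).1) := by
  classical
  set ord : α.ToType → Ordinal.{u} := fun i => ((Ordinal.ToType.mk (o := α)).symm i).1 with hord
  have hord_lt : ∀ i, ord i < α := fun i => ((Ordinal.ToType.mk (o := α)).symm i).2
  have hord_len : ∀ i, ord i < δ := fun i => lt_of_lt_of_le (hord_lt i) hα
  have hordmono : ∀ i j, i < j → ord i < ord j := fun i j hij =>
    Subtype.coe_lt_coe.2 ((OrderIso.lt_iff_lt _).2 hij)
  have hsucc_le : ∀ {a b : Ordinal.{u}}, a < b → a + 1 ≤ b := fun {a b} h => by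
    rw [Ordinal.add_one_eq_succ]; exact Order.succ_le_iff.2 h
  have hCle : ∀ i, C (ord i) ≤ fl.F α := fun i =>
    (hC1 _ (hord_len i)).trans (fl.mono (hsucc_le (hord_lt i)))
  set D : α.ToType → Submodule R ↥(fl.F α) :=
    fun i => Submodule.comap (fl.F α).subtype (C (ord i)) with hD
  have hmapD : ∀ i, Submodule.map (fl.F α).subtype (D i) = C (ord i) := fun i => by
    rw [hD, Submodule.map_comap_subtype]
    exact inf_eq_right.2 (hCle i)
  have hindep : iSupIndep D := by
    apply aux_indep D (fun i => Submodule.comap (fl.F α).subtype (fl.F (ord i)))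
    · intro i
      rw [hD, ← Submodule.comap_inf, hC2 (ord i) (hord_len i), Submodule.comap_bot,
        Submodule.ker_subtype]
    · intro i j hij
      apply Submodule.comap_mono
      exact (hC1 _ (hord_len i)).trans (fl.mono (hsucc_le (hordmono i j hij)))
  have hsupC : (⨆ i, C (ord i)) = fl.F α := by
    rw [filt_sup fl C δ hδ hC1 hC3 α hα]
    apply le_antisymm
    · exact iSup_le fun i => le_biSup _ (hord_lt i)
    · apply iSup₂_le
      intro β hβ
      have hβ' : β = ord ((Ordinal.ToType.mk (o := α)) ⟨β, hβ⟩) := by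
        rw [hord]; simp
      rw [hβ']
      exact le_iSup (fun i => C (ord i)) _
  have hsupD : (⨆ i, D i) = ⊤ := by
    apply Submodule.map_injective_of_injective (Submodule.injective_subtype (fl.F α))
    rw [Submodule.map_iSup]
    simp only [hmapD]
    rw [hsupC, Submodule.map_top, Submodule.range_subtype]
  have hint : DirectSum.IsInternal D :=
    (DirectSum.isInternal_submodule_iff_iSupIndep_and_iSup_eq_top D).2 ⟨hindep, hsupD⟩
  let e1 : (⨁ i, ↥(D i)) ≃ₗ[R] ↥(fl.F α) :=
    LinearEquiv.ofBijective (DirectSum.coeLinearMap D) hint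
  let e2 : ∀ i, ↥(D i) ≃ₗ[R] fl.quot (ord i) := fun i =>
    (Submodule.comapSubtypeEquivOfLe (hCle i)).trans (hC4 (ord i) (hord_len i)).some
  let e3 : (⨁ i, ↥(D i)) ≃ₗ[R] ⨁ i, fl.quot (ord i) :=
    DFinsupp.mapRange.linearEquiv e2
  exact ⟨e1.symm.trans e3⟩

theorem statement4 (𝒳 : ModuleCat.{u} R → Prop)
    (horth : ∀ A B : ModuleCat.{u} R, 𝒳 A → 𝒳 B → extZero 1 A B)
    (hsum : ∀ (ι : Type u) (f : ι → ModuleCat.{u} R), (∀ i, 𝒳 (f i)) →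
      𝒳 (ModuleCat.of R (⨁ i, f i)))
    (hiso : ∀ A B : ModuleCat.{u} R, 𝒳 A → (A ≃ₗ[R] B) → 𝒳 B)
    (M : ModuleCat.{u} R) (fl : ModFiltration M) (hq : ∀ o < fl.len, 𝒳 (fl.quot o)) :
    Nonempty ((M : Type u) ≃ₗ[R]
      ⨁ i : fl.len.ToType, fl.quot ((Ordinal.ToType.mk (o := fl.len)).symm i).1) ∧
    𝒳 M := by
  classical
  set Good : Ordinal.{u} → Prop := fun o =>
    ∃ C : Submodule R M, C ≤ fl.F (o + 1) ∧ fl.F o ⊓ C = ⊥ ∧ fl.F o ⊔ C = fl.F (o + 1) ∧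
      Nonempty (↥C ≃ₗ[R] fl.quot o) with hGoodDef
  let C : Ordinal.{u} → Submodule R M := fun o => if h : Good o then h.choose else ⊥
  have hCspec : ∀ o, Good o → C o ≤ fl.F (o + 1) ∧ fl.F o ⊓ C o = ⊥ ∧
      fl.F o ⊔ C o = fl.F (o + 1) ∧ Nonempty (↥(C o) ≃ₗ[R] fl.quot o) := by
    intro o h
    have hCeq : C o = h.choose := dif_pos h
    rw [hCeq]
    exact h.choose_spec
  have key : ∀ o, o < fl.len → Good o := by
    intro o
    induction o using Ordinal.induction with
    | h o IH =>
    intro ho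
    have hGood : ∀ β < o, Good β := fun β hβ => IH β hβ (hβ.trans ho)
    obtain ⟨e⟩ := filt_equiv fl C o ho.le
      (fun β hβ => (hCspec β (hGood β hβ)).1)
      (fun β hβ => (hCspec β (hGood β hβ)).2.1)
      (fun β hβ => (hCspec β (hGood β hβ)).2.2.1)
      (fun β hβ => (hCspec β (hGood β hβ)).2.2.2)
      o le_rfl
    have hX1 : 𝒳 (ModuleCat.of R
        (⨁ i : o.ToType, fl.quot ((Ordinal.ToType.mk (o := o)).symm i).1)) :=
      hsum o.ToType _ (fun i => hq _ (lt_trans ((Ordinal.ToType.mk (o := o)).symm i).2 ho))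
    have hXF : 𝒳 (ModuleCat.of R ↥(fl.F o)) := hiso _ _ hX1 e.symm
    have hx : extZero 1 (fl.quot o) (ModuleCat.of R ↥(fl.F o)) := horth _ _ (hq o ho) hXF
    have hNP : fl.F o ≤ fl.F (o + 1) := fl.mono (by
      rw [Ordinal.add_one_eq_succ]; exact Order.le_succ o)
    exact exists_compl (fl.F o) (fl.F (o + 1)) hNP hx
  obtain ⟨e⟩ := filt_equiv fl C fl.len le_rfl
    (fun β hβ => (hCspec β (key β hβ)).1)
    (fun β hβ => (hCspec β (key β hβ)).2.1)
    (fun β hβ => (hCspec β (key β hβ)).2.2.1)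
    (fun β hβ => (hCspec β (key β hβ)).2.2.2)
    fl.len le_rfl
  let etop : (M : Type u) ≃ₗ[R] ↥(fl.F fl.len) :=
    Submodule.topEquiv.symm.trans (LinearEquiv.ofEq ⊤ (fl.F fl.len) fl.top.symm)
  let efinal := etop.trans e
  refine ⟨⟨efinal⟩, ?_⟩
  have hX1 : 𝒳 (ModuleCat.of R
      (⨁ i : fl.len.ToType, fl.quot ((Ordinal.ToType.mk (o := fl.len)).symm i).1)) :=
    hsum fl.len.ToType _ (fun i => hq _ ((Ordinal.ToType.mk (o := fl.len)).symm i).2)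
  exact hiso _ M hX1 efinal.symm
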